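/- Let N ≥ 2, α ∈ (1/2, 1), b > 0 and c ∈ ℝ, and define w : ℝ^N → ℝ by w(x) = c + (α·(3/2 − α)^{1/2}/(b(1 − α)))·x₁ − x₁⁴/(12b²) + Σ_{i=2}^{N} (−b²·x_i² + b·(3/2 − α)^{1/2}·x₁·x_i² − x₁²·x_i²). Then there exists ρ > 0 such that for every x with 0 < ‖x‖ ≤ ρ, the Hessian matrix D²w(x) is negative definite, i.e. vᵀ·D²w(x)·v < 0 for every nonzero v ∈ ℝ^N. -/

import Mathlib

noncomputable def pr (N : ℕ) (i : Fin N) : EuclideanSpace ℝ (Fin N) →L[ℝ] ℝ :=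
  EuclideanSpace.proj i

@[simp] lemma pr_apply {N : ℕ} (i : Fin N) (v : EuclideanSpace ℝ (Fin N)) :
    pr N i v = v i := rfl

lemma coord_hasFDerivAt {N : ℕ} (i : Fin N) (y : EuclideanSpace ℝ (Fin N)) :
    HasFDerivAt (fun x : EuclideanSpace ℝ (Fin N) => x i) (pr N i) y :=
  (pr N i).hasFDerivAt

lemma hfd_pow {E : Type*} [NormedAddCommGroup E] [NormedSpace ℝ E]
    {f : E → ℝ} {f' : E →L[ℝ] ℝ} {x : E} (h : HasFDerivAt f f' x) (n : ℕ) :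
    HasFDerivAt (fun y => f y ^ (n + 1)) (((n + 1 : ℝ) * f x ^ n) • f') x := by
  induction n with
  | zero => simpa using h
  | succ n ih =>
      have H := ih.fun_mul h
      have hfun : (fun y => f y ^ (n + 1) * f y) = fun y => f y ^ (n + 1 + 1) := by
        funext y; ring
      rw [hfun] at H
      refine H.congr_fderiv ?_
      rw [smul_smul, ← add_smul]
      congr 1
      push_cast
      ring

lemma hfd_divc {E : Type*} [NormedAddCommGroup E] [NormedSpace ℝ E]
    {f : E → ℝ} {f' : E →L[ℝ] ℝ} {x : E} (h : HasFDerivAt f f' x) (c : ℝ) :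
    HasFDerivAt (fun y => f y / c) (c⁻¹ • f') x := by
  have H := h.mul_const c⁻¹
  simpa [div_eq_mul_inv, smul_smul, mul_comm] using H

lemma hfd_sq {E : Type*} [NormedAddCommGroup E] [NormedSpace ℝ E]
    {f : E → ℝ} {f' : E →L[ℝ] ℝ} {x : E} (h : HasFDerivAt f f' x) :
    HasFDerivAt (fun y => f y ^ 2) ((2 * f x) • f') x := by
  have H := hfd_pow h 1; norm_num at H; exact H

lemma hfd_cube {E : Type*} [NormedAddCommGroup E] [NormedSpace ℝ E]
    {f : E → ℝ} {f' : E →L[ℝ] ℝ} {x : E} (h : HasFDerivAt f f' x) :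
    HasFDerivAt (fun y => f y ^ 3) ((3 * f x ^ 2) • f') x := by
  have H := hfd_pow h 2; norm_num at H; exact H

lemma hfd_p4 {E : Type*} [NormedAddCommGroup E] [NormedSpace ℝ E]
    {f : E → ℝ} {f' : E →L[ℝ] ℝ} {x : E} (h : HasFDerivAt f f' x) :
    HasFDerivAt (fun y => f y ^ 4) ((4 * f x ^ 3) • f') x := by
  have H := hfd_pow h 3; norm_num at H; exact H

lemma deriv1 {N : ℕ} (i0 : Fin N) (A B b c : ℝ) (s : Finset (Fin N))
    (y v : EuclideanSpace ℝ (Fin N)) :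
    fderiv ℝ (fun x : EuclideanSpace ℝ (Fin N) =>
        c + A * x i0 - (x i0) ^ 4 / (12 * b ^ 2) +
        ∑ i ∈ s, (-(b ^ 2) * (x i) ^ 2 + B * x i0 * (x i) ^ 2 - (x i0) ^ 2 * (x i) ^ 2)) y v
      = A * v i0 - (y i0) ^ 3 * v i0 / (3 * b ^ 2) +
        ∑ i ∈ s, ((B - 2 * y i0) * v i0 * (y i) ^ 2
          + 2 * (-(b ^ 2) + B * y i0 - (y i0) ^ 2) * y i * v i) := by
  have H := ((((coord_hasFDerivAt i0 y).const_mul A).const_add c).fun_sub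
        (hfd_divc (hfd_p4 (coord_hasFDerivAt i0 y)) (12 * b ^ 2))).fun_add
       (HasFDerivAt.fun_sum (u := s) (fun i _ => (((hfd_sq (coord_hasFDerivAt i y)).const_mul
            (-(b ^ 2))).fun_add
          (((coord_hasFDerivAt i0 y).const_mul B).fun_mul (hfd_sq (coord_hasFDerivAt i y)))).fun_sub
          ((hfd_sq (coord_hasFDerivAt i0 y)).fun_mul (hfd_sq (coord_hasFDerivAt i y)))))
  rw [H.fderiv]
  simp only [ContinuousLinearMap.add_apply, ContinuousLinearMap.sub_apply,
    ContinuousLinearMap.smul_apply, ContinuousLinearMap.coe_sum', Finset.sum_apply,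
    pr_apply, smul_eq_mul]
  rw [Finset.sum_congr rfl (fun i _ => by ring :
    ∀ i ∈ s, -b ^ 2 * (2 * y i * v i) + (B * y i0 * (2 * y i * v i) + y i ^ 2 * (B * v i0)) -
      (y i0 ^ 2 * (2 * y i * v i) + y i ^ 2 * (2 * y i0 * v i0)) =
      (B - 2 * y i0) * v i0 * (y i) ^ 2 + 2 * (-(b ^ 2) + B * y i0 - (y i0) ^ 2) * y i * v i)]
  ring

lemma deriv2 {N : ℕ} (i0 : Fin N) (A B b : ℝ) (s : Finset (Fin N))
    (x v : EuclideanSpace ℝ (Fin N)) :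
    fderiv ℝ (fun y : EuclideanSpace ℝ (Fin N) =>
        A * v i0 - (y i0) ^ 3 * v i0 / (3 * b ^ 2) +
        ∑ i ∈ s, ((B - 2 * y i0) * v i0 * (y i) ^ 2
          + 2 * (-(b ^ 2) + B * y i0 - (y i0) ^ 2) * y i * v i)) x v
      = -((x i0) ^ 2 * (v i0) ^ 2 / b ^ 2) +
        ∑ i ∈ s, (-2 * (v i0) ^ 2 * (x i) ^ 2
          + 4 * (B - 2 * x i0) * (v i0) * (x i) * (v i)
          + 2 * (-(b ^ 2) + B * x i0 - (x i0) ^ 2) * (v i) ^ 2) := by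
  have H := ((hasFDerivAt_const (A * v i0) x).fun_sub
      (hfd_divc ((hfd_cube (coord_hasFDerivAt i0 x)).mul_const (v i0)) (3 * b ^ 2))).fun_add
    (HasFDerivAt.fun_sum (u := s) (fun i _ =>
      ((((hasFDerivAt_const B x).fun_sub ((coord_hasFDerivAt i0 x).const_mul 2)).mul_const
          (v i0)).fun_mul (hfd_sq (coord_hasFDerivAt i x))).fun_add
      (((((((coord_hasFDerivAt i0 x).const_mul B).const_add (-(b ^ 2))).fun_sub
          (hfd_sq (coord_hasFDerivAt i0 x))).const_mul 2).fun_mul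
            (coord_hasFDerivAt i x)).mul_const (v i))))
  rw [H.fderiv]
  simp only [ContinuousLinearMap.add_apply, ContinuousLinearMap.sub_apply,
    ContinuousLinearMap.smul_apply, ContinuousLinearMap.coe_sum', Finset.sum_apply,
    pr_apply, smul_eq_mul, ContinuousLinearMap.zero_apply]
  rw [Finset.sum_congr rfl (fun i _ => by ring :
    ∀ i ∈ s, (B - 2 * x i0) * v i0 * (2 * x i * v i) + x i ^ 2 * (v i0 * (0 - 2 * v i0)) +
      v i * (2 * (-b ^ 2 + B * x i0 - x i0 ^ 2) * v i + x i * (2 * (B * v i0 - 2 * x i0 * v i0))) =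
      -2 * (v i0) ^ 2 * (x i) ^ 2 + 4 * (B - 2 * x i0) * (v i0) * (x i) * (v i)
        + 2 * (-(b ^ 2) + B * x i0 - (x i0) ^ 2) * (v i) ^ 2)]
  ring

set_option maxHeartbeats 1000000

lemma norm_sq_eq_sum {N : ℕ} (x : EuclideanSpace ℝ (Fin N)) :
    ‖x‖ ^ 2 = ∑ i, (x i) ^ 2 := by
  rw [EuclideanSpace.norm_eq, Real.sq_sqrt (by positivity)]
  simp [Real.norm_eq_abs, sq_abs]

/-- For `α ∈ (1/2, 1)`, `b > 0`, and
`w(x) = c + (α(3/2-α)^{1/2}/(b(1-α))) x₁ - x₁⁴/(12b²)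
  + Σ_{i=2}^N (-b² x_i² + b(3/2-α)^{1/2} x₁ x_i² - x₁² x_i²)` on `ℝ^N` (`N ≥ 2`),
there is `ρ > 0` such that the Hessian of `w` is negative definite at every `x`
with `0 < ‖x‖ ≤ ρ`. -/
theorem stmt_9 (N : ℕ) (hN : 2 ≤ N) (α b c : ℝ)
    (hα : α ∈ Set.Ioo (1/2 : ℝ) 1) (hb : 0 < b)
    (w : EuclideanSpace ℝ (Fin N) → ℝ)
    (hw : ∀ x : EuclideanSpace ℝ (Fin N),
      w x = c + (α * Real.sqrt (3/2 - α) / (b * (1 - α))) * x ⟨0, by omega⟩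
        - (x ⟨0, by omega⟩) ^ 4 / (12 * b ^ 2) +
        ∑ i : Fin N, if i ≠ ⟨0, by omega⟩ then
          -(b ^ 2) * (x i) ^ 2 + b * Real.sqrt (3/2 - α) * x ⟨0, by omega⟩ * (x i) ^ 2
            - (x ⟨0, by omega⟩) ^ 2 * (x i) ^ 2
        else 0) :
    ∃ ρ : ℝ, 0 < ρ ∧ ∀ x : EuclideanSpace ℝ (Fin N), 0 < ‖x‖ → ‖x‖ ≤ ρ →
      ∀ v : EuclideanSpace ℝ (Fin N), v ≠ 0 →
        fderiv ℝ (fun y => fderiv ℝ w y v) x v < 0 := by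
  obtain ⟨hα1, hα2⟩ := hα
  have h0N : (0 : ℕ) < N := by omega
  set i0 : Fin N := ⟨0, h0N⟩ with hi0
  set A : ℝ := α * Real.sqrt (3/2 - α) / (b * (1 - α)) with hA
  set B : ℝ := b * Real.sqrt (3/2 - α) with hB
  set sfin : Finset (Fin N) := Finset.univ.filter (fun j => j ≠ i0) with hsfin
  -- rewrite w in sum-over-filter form
  have hwW : w = fun x : EuclideanSpace ℝ (Fin N) =>
      c + A * x i0 - (x i0) ^ 4 / (12 * b ^ 2) +
      ∑ i ∈ sfin, (-(b ^ 2) * (x i) ^ 2 + B * x i0 * (x i) ^ 2 - (x i0) ^ 2 * (x i) ^ 2) := by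
    funext x
    rw [hw x, hsfin, Finset.sum_filter]
  -- basic facts about B
  have hs32 : (0:ℝ) ≤ 3/2 - α := by linarith
  have hB2 : B ^ 2 = b ^ 2 * (3/2 - α) := by
    rw [hB, mul_pow, Real.sq_sqrt hs32]
  have hBnn : 0 ≤ B := mul_nonneg hb.le (Real.sqrt_nonneg _)
  have hBb : B ≤ b := by nlinarith [Real.sqrt_nonneg (3/2 - α)]
  clear_value A B
  -- choice of ρ
  set ρ : ℝ := min 1 (b ^ 2 * (α - 1/2) / (7 * (1 + b))) with hρdef
  have hδ : 0 < b ^ 2 * (α - 1/2) := mul_pos (pow_pos hb 2) (by linarith)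
  have hρpos : 0 < ρ := lt_min one_pos (by positivity)
  have hρ1 : ρ ≤ 1 := min_le_left _ _
  have h7 : ρ * (7 * (1 + b)) ≤ b ^ 2 * (α - 1/2) :=
    (le_div_iff₀ (by positivity)).mp (min_le_right _ _)
  clear_value ρ
  refine ⟨ρ, hρpos, fun x hx0 hxρ v hv => ?_⟩
  -- first and second derivatives
  have key1 : ∀ y : EuclideanSpace ℝ (Fin N), fderiv ℝ w y v
      = A * v i0 - (y i0) ^ 3 * v i0 / (3 * b ^ 2) +
        ∑ i ∈ sfin, ((B - 2 * y i0) * v i0 * (y i) ^ 2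
          + 2 * (-(b ^ 2) + B * y i0 - (y i0) ^ 2) * y i * v i) := fun y => by
    rw [hwW]; exact deriv1 i0 A B b c sfin y v
  have key2 : fderiv ℝ (fun y => fderiv ℝ w y v) x v
      = -((x i0) ^ 2 * (v i0) ^ 2 / b ^ 2) +
        ∑ i ∈ sfin, (-2 * (v i0) ^ 2 * (x i) ^ 2
          + 4 * (B - 2 * x i0) * (v i0) * (x i) * (v i)
          + 2 * (-(b ^ 2) + B * x i0 - (x i0) ^ 2) * (v i) ^ 2) := by
    have : (fun y => fderiv ℝ w y v)
        = fun y => A * v i0 - (y i0) ^ 3 * v i0 / (3 * b ^ 2) +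
          ∑ i ∈ sfin, ((B - 2 * y i0) * v i0 * (y i) ^ 2
            + 2 * (-(b ^ 2) + B * y i0 - (y i0) ^ 2) * y i * v i) := funext key1
    rw [this]; exact deriv2 i0 A B b sfin x v
  rw [key2]
  -- abbreviations
  have hsfin_erase : sfin = Finset.univ.erase i0 := Finset.filter_ne' _ _
  have hsplit : (x i0) ^ 2 + ∑ i ∈ sfin, (x i) ^ 2 = ‖x‖ ^ 2 := by
    rw [norm_sq_eq_sum, hsfin_erase]
    exact Finset.add_sum_erase Finset.univ (fun i => x i ^ 2) (Finset.mem_univ i0)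
  set t : ℝ := x i0 with ht
  set S : ℝ := ∑ i ∈ sfin, (x i) ^ 2 with hS
  have hSnn : 0 ≤ S := Finset.sum_nonneg fun i _ => sq_nonneg _
  clear_value t S
  have hx2 : t ^ 2 ≤ ρ ^ 2 := by
    have h1 : t ^ 2 ≤ ‖x‖ ^ 2 := by nlinarith
    have h2 : ‖x‖ ^ 2 ≤ ρ ^ 2 := by nlinarith [norm_nonneg x]
    linarith
  have habs : |t| ≤ ρ := by
    rw [← Real.sqrt_sq_eq_abs, ← Real.sqrt_sq hρpos.le]
    exact Real.sqrt_le_sqrt hx2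
  have habs1 : -ρ ≤ t := neg_le_of_abs_le habs
  have habs2 : t ≤ ρ := le_of_abs_le habs
  have hpos : 0 < t ^ 2 + S := by nlinarith
  -- the key coefficient inequality
  have hkey : (B - 2*t) ^ 2 < b ^ 2 - B * t + t ^ 2 := by
    have h1 : t ^ 2 ≤ ρ ^ 2 := hx2
    have h2 : ρ ^ 2 ≤ ρ := by nlinarith
    have h3 : -(3 * B * t) ≤ 3 * B * ρ := by nlinarith
    have h4 : 3 * B * ρ ≤ 3 * b * ρ := by nlinarith
    nlinarith
  have hdpos : 0 < b ^ 2 - B * t + t ^ 2 := lt_of_le_of_lt (sq_nonneg _) hkey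
  by_cases hv0 : v i0 = 0
  · -- pure sum case
    obtain ⟨j, hj⟩ : ∃ j, v j ≠ 0 := by
      by_contra h
      push_neg at h
      apply hv
      have h2 : ‖v‖ ^ 2 = 0 := by
        rw [norm_sq_eq_sum]
        exact Finset.sum_eq_zero fun i _ => by rw [h i]; ring
      have h3 : ‖v‖ = 0 := by nlinarith [norm_nonneg v]
      exact norm_eq_zero.mp h3
    have hjs : j ∈ sfin := by
      rw [hsfin]
      refine Finset.mem_filter.mpr ⟨Finset.mem_univ _, fun hji => ?_⟩
      exact hj (hji ▸ hv0)
    rw [Finset.sum_congr rfl (fun i _ => by rw [hv0]; ring :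
      ∀ i ∈ sfin, -2 * (v i0) ^ 2 * (x i) ^ 2
          + 4 * (B - 2 * t) * (v i0) * (x i) * (v i)
          + 2 * (-(b ^ 2) + B * t - t ^ 2) * (v i) ^ 2
        = (2 * (-(b ^ 2) + B * t - t ^ 2)) * (v i) ^ 2), ← Finset.mul_sum, hv0]
    have hsum : (v j) ^ 2 ≤ ∑ i ∈ sfin, (v i) ^ 2 :=
      Finset.single_le_sum (fun i _ => sq_nonneg (v i)) hjs
    have hsumpos : 0 < ∑ i ∈ sfin, (v i) ^ 2 := lt_of_lt_of_le (by positivity) hsum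
    have hco : 2 * (-(b ^ 2) + B * t - t ^ 2) < 0 := by nlinarith
    have := mul_neg_of_neg_of_pos hco hsumpos
    simp only [ne_eq, OfNat.ofNat_ne_zero, not_false_eq_true, zero_pow, mul_zero, zero_div,
      neg_zero, zero_add]
    linarith [this]
  · -- v i0 ≠ 0
    have hv02 : 0 < (v i0) ^ 2 := by positivity
    set d : ℝ := 2 * (b ^ 2 - B * t + t ^ 2) with hd
    have hd0 : 0 < d := by rw [hd]; linarith
    have hcoef : 4 * (B - 2*t) ^ 2 - 2 * d < 0 := by rw [hd]; nlinarith
    have hco : ∀ i ∈ sfin, -2 * (v i0) ^ 2 * (x i) ^ 2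
          + 4 * (B - 2 * t) * (v i0) * (x i) * (v i)
          + 2 * (-(b ^ 2) + B * t - t ^ 2) * (v i) ^ 2
        = -2 * (v i0) ^ 2 * (x i) ^ 2 + 4 * (B - 2 * t) * (v i0) * (x i) * (v i)
          - d * (v i) ^ 2 := fun i _ => by rw [hd]; ring
    rw [Finset.sum_congr rfl hco]
    clear_value d
    clear hw hwW key1 key2 hv hx0 hxρ hd hkey hsplit habs hρdef h7 hB hA hα2 hs32 hB2
    have hterm : ∀ i ∈ sfin,
        d * (-2 * (v i0) ^ 2 * (x i) ^ 2
          + 4 * (B - 2 * t) * (v i0) * (x i) * (v i) - d * (v i) ^ 2)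
        ≤ (4 * (B - 2*t) ^ 2 - 2 * d) * (x i) ^ 2 * (v i0) ^ 2 := by
      intro i _
      nlinarith [sq_nonneg (d * v i - 2 * (B - 2*t) * x i * v i0)]
    have hsumle : d * (∑ i ∈ sfin, (-2 * (v i0) ^ 2 * (x i) ^ 2
          + 4 * (B - 2 * t) * (v i0) * (x i) * (v i) - d * (v i) ^ 2))
        ≤ (4 * (B - 2*t) ^ 2 - 2 * d) * S * (v i0) ^ 2 := by
      rw [Finset.mul_sum]
      calc ∑ i ∈ sfin, d * (-2 * (v i0) ^ 2 * (x i) ^ 2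
            + 4 * (B - 2 * t) * (v i0) * (x i) * (v i) - d * (v i) ^ 2)
          ≤ ∑ i ∈ sfin, (4 * (B - 2*t) ^ 2 - 2 * d) * (x i) ^ 2 * (v i0) ^ 2 :=
            Finset.sum_le_sum hterm
        _ = (4 * (B - 2*t) ^ 2 - 2 * d) * S * (v i0) ^ 2 := by
            rw [hS, Finset.mul_sum, Finset.sum_mul]
    have hfirst : 0 ≤ t ^ 2 * (v i0) ^ 2 / b ^ 2 := by positivity
    rcases eq_or_lt_of_le hSnn with hS0 | hS0
    · -- S = 0 : all x i = 0 on sfin, and t ≠ 0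
      have ht2 : 0 < t ^ 2 := by nlinarith
      have htne : t ≠ 0 := fun h => by simp [h] at ht2
      have hxz : ∀ i ∈ sfin, (x i) ^ 2 = 0 := by
        intro i hi
        have h0 := (Finset.sum_eq_zero_iff_of_nonneg
          (fun i _ => sq_nonneg (x i))).mp (hS ▸ hS0.symm)
        exact h0 i hi
      have hsum0 : (∑ i ∈ sfin, (-2 * (v i0) ^ 2 * (x i) ^ 2
          + 4 * (B - 2 * t) * (v i0) * (x i) * (v i) - d * (v i) ^ 2)) ≤ 0 := by
        refine Finset.sum_nonpos fun i hi => ?_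
        have h1 := hterm i hi
        have h2 : (4 * (B - 2*t) ^ 2 - 2 * d) * (x i) ^ 2 * (v i0) ^ 2 = 0 := by
          rw [hxz i hi]; ring
        nlinarith [h1, h2, hd0]
      have hfs : 0 < t ^ 2 * (v i0) ^ 2 / b ^ 2 := by positivity
      linarith
    · -- S > 0 : the sum is strictly negative
      have hstrict : (4 * (B - 2*t) ^ 2 - 2 * d) * S * (v i0) ^ 2 < 0 :=
        mul_neg_of_neg_of_pos (mul_neg_of_neg_of_pos hcoef hS0) hv02
      have hsumneg : (∑ i ∈ sfin, (-2 * (v i0) ^ 2 * (x i) ^ 2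
          + 4 * (B - 2 * t) * (v i0) * (x i) * (v i) - d * (v i) ^ 2)) < 0 := by
        by_contra h
        push_neg at h
        nlinarith [mul_nonneg hd0.le h]
      linarith
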